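/- Let X ⊂ P^n be a hypersurface of degree d with a point p of multiplicity d-1. If p' ≠ p is any singular point of X, then the line through p and p' is contained in X. -/
import Mathlib


open MvPolynomial

lemma eval_smul_of_isHomogeneous {σ : Type*} (φ : MvPolynomial σ ℂ) {m : ℕ}
    (hφ : φ.IsHomogeneous m) (c : ℂ) (x : σ → ℂ) :
    eval (c • x) φ = c ^ m * eval x φ := by
  rw [eval_eq, eval_eq, Finset.mul_sum]
  apply Finset.sum_congr rfl
  intro e he
  have hdeg : (Finsupp.weight 1) e = m := hφ (mem_support_iff.1 he)
  have : ∏ i ∈ e.support, (c • x) i ^ e i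
      = c ^ m * ∏ i ∈ e.support, x i ^ e i := by
    simp only [Pi.smul_apply, smul_eq_mul, mul_pow]
    rw [Finset.prod_mul_distrib, Finset.prod_pow_eq_pow_sum]
    congr 1
    rw [← hdeg, Finsupp.weight_apply, Finsupp.sum]
    simp
  rw [this]; ring

lemma pderiv_zero_rename_succ {n : ℕ} (g : MvPolynomial (Fin n) ℂ) :
    pderiv (0 : Fin (n + 1)) (rename Fin.succ g) = 0 := by
  induction g using MvPolynomial.induction_on with
  | C a => simp
  | add p q hp hq => simp [hp, hq]
  | mul_X p i hp =>
    simp [hp, pderiv_X, Pi.single_apply, (Fin.succ_ne_zero i).symm]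

/-- Let `X = V(F) ⊂ ℙⁿ` be a hypersurface of degree `d` with a point `p` of multiplicity
`d-1`, i.e. `p = (1,0,…,0)` and `F = x₀ q + f` with `q, f` homogeneous of degrees `d-1, d`
in the remaining variables. If `p' ≠ p` is any singular point of `X`, then the line
through `p` and `p'` is contained in `X`. -/
theorem line_through_mult_point_and_sing_point
    (n d : ℕ) (hd : 2 ≤ d)
    (q f : MvPolynomial (Fin n) ℂ)
    (hq : q.IsHomogeneous (d - 1)) (hf : f.IsHomogeneous d)
    (F : MvPolynomial (Fin (n + 1)) ℂ)
    (hF : F = X 0 * rename Fin.succ q + rename Fin.succ f)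
    (p p' : Fin (n + 1) → ℂ)
    (hp : p = fun i => if i = 0 then 1 else 0)
    (hp'0 : p' ≠ 0)
    (hne : ∀ c : ℂ, p' ≠ c • p)
    (hsing : ∀ i, eval p' (pderiv i F) = 0)
    (hon : eval p' F = 0) :
    ∀ s t : ℂ, eval (s • p + t • p') F = 0 := by
  intro s t
  set v : Fin n → ℂ := p' ∘ Fin.succ with hv
  -- from the partial derivative in x₀ : q(v) = 0
  have hq0 : eval v q = 0 := by
    have := hsing 0
    rw [hF] at this
    simp only [map_add, Derivation.leibniz, pderiv_X, Pi.single_eq_same, smul_eq_mul, one_mul,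
      pderiv_zero_rename_succ, mul_zero, zero_mul, smul_zero, add_zero, map_zero,
      eval_rename] at this
    simpa [eval_rename, hv] using this
  -- from p' ∈ X : f(v) = 0
  have hf0 : eval v f = 0 := by
    rw [hF] at hon
    simp only [map_add, map_mul, eval_X, eval_rename] at hon
    rw [show p' ∘ Fin.succ = v from rfl, hq0, mul_zero, zero_add] at hon
    exact hon
  -- now evaluate on the line
  have hcomp : (s • p + t • p') ∘ Fin.succ = t • v := by
    funext i
    simp [hp, hv, Fin.succ_ne_zero i]
  rw [hF]
  simp only [map_add, map_mul, eval_X, eval_rename, hcomp,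
    eval_smul_of_isHomogeneous q hq, eval_smul_of_isHomogeneous f hf, hq0, hf0]
  ring
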